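/- Let R = ℂ⟦x₁,…,xₙ⟧, let g = u·x₁^{a₁}⋯x_m^{a_m} with u a unit and a₁,…,a_m ≥ 1, and let D = V(g), E = V(x₁⋯x_m). Then for every k > 0, for every form ω ∈ Ω^{k−1}_R of the shape ω = f·x₁⋯x_m·(∏_{j∈J} dx_j/x_j)·(∏_{i∈I} dx_i) with J ⊆ {1,…,m}, I ⊆ {m+1,…,n}, |J|+|I| = k−1, the element ω ∧ dg lies in g·Ω^k_R; i.e. the image of ω ∧ dg in Ω^k_R ⊗ R/(g) is zero. -/

import Mathlib

open ExteriorAlgebra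

set_option synthInstance.maxHeartbeats 2000000
set_option maxHeartbeats 2000000

section AuxLemmasForStatement14

variable {R : Type*} [CommRing R] {M : Type*} [AddCommGroup M] [Module R M]

lemma aux14_prod_mem (l : List M) :
    (l.map (ι R)).prod ∈ ⋀[R]^(l.length) M := by
  induction l with
  | nil =>
      simp only [List.map_nil, List.prod_nil, List.length_nil, pow_zero]
      exact Submodule.one_le.mp le_rfl
  | cons a l ih =>
      rw [List.map_cons, List.prod_cons, List.length_cons]
      have h2 := Submodule.mul_mem_mul (LinearMap.mem_range_self (ι R) a) ih
      rwa [← pow_succ'] at h2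

lemma aux14_swap (x y : M) : ι R x * ι R y = -(ι R y * ι R x) :=
  eq_neg_of_add_eq_zero_left (ι_add_mul_swap x y)

lemma aux14_sandwich (x : M) (l : List M) :
    ι R x * ((l.map (ι R)).prod * ι R x) = 0 := by
  induction l with
  | nil => simp [ι_sq_zero]
  | cons b l ih =>
      rw [List.map_cons, List.prod_cons, mul_assoc (ι R b), ← mul_assoc (ι R x),
        aux14_swap x b, neg_mul, mul_assoc, ih, mul_zero, neg_zero]

lemma aux14_prod_mul (m : M) (l : List M) (h : m ∈ l) :
    (l.map (ι R)).prod * ι R m = 0 := by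
  induction l with
  | nil => simp at h
  | cons b l ih =>
      rw [List.map_cons, List.prod_cons, mul_assoc]
      rcases List.mem_cons.mp h with rfl | h'
      · exact aux14_sandwich m l
      · rw [ih h', mul_zero]

lemma aux14_deriv_prod {R A M : Type*} [CommRing R] [CommRing A] [Algebra R A]
    [AddCommGroup M] [Module A M] [Module R M] [IsScalarTower R A M]
    (D : Derivation R A M) {σ : Type*} [DecidableEq σ] (s : Finset σ) (f : σ → A) :
    D (∏ i ∈ s, f i) = ∑ i ∈ s, (∏ j ∈ s.erase i, f j) • D (f i) := by
  induction s using Finset.induction_on with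
  | empty => simp
  | @insert a s ha ih =>
      rw [Finset.prod_insert ha, D.leibniz, ih, Finset.smul_sum, Finset.sum_insert ha,
        Finset.erase_insert ha, add_comm]
      congr 1
      refine Finset.sum_congr rfl fun i hi => ?_
      rw [smul_smul, Finset.erase_insert_of_ne (fun h => ha (by rw [h]; exact hi)),
        Finset.prod_insert (fun h => ha (Finset.erase_subset _ _ h))]

end AuxLemmasForStatement14

theorem log_form_wedge_dg_divisible (n m : ℕ) (hm : m ≤ n)
    (u : MvPowerSeries (Fin n) ℂ) (hu : IsUnit u)
    (a : Fin n → ℕ)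
    (ha : ∀ t ∈ Finset.univ.filter (fun t : Fin n => (t : ℕ) < m), 1 ≤ a t)
    (K : ℕ) (hK : 0 < K)
    (J I : Finset (Fin n))
    (hJ : J ⊆ Finset.univ.filter (fun t : Fin n => (t : ℕ) < m))
    (hI : ∀ i ∈ I, m ≤ (i : ℕ))
    (hcard : J.card + I.card = K - 1)
    (f : MvPowerSeries (Fin n) ℂ) :
    ∃ η : ExteriorAlgebra (MvPowerSeries (Fin n) ℂ) (Ω[MvPowerSeries (Fin n) ℂ⁄ℂ]),
      η ∈ ⋀[MvPowerSeries (Fin n) ℂ]^K (Ω[MvPowerSeries (Fin n) ℂ⁄ℂ]) ∧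
      ((f * ∏ t ∈ (Finset.univ.filter (fun t : Fin n => (t : ℕ) < m)) \ J,
          MvPowerSeries.X t) •
        (((J.sort (· ≤ ·) ++ I.sort (· ≤ ·)).map
          (fun t => ι (MvPowerSeries (Fin n) ℂ)
            ((KaehlerDifferential.D ℂ (MvPowerSeries (Fin n) ℂ)) (MvPowerSeries.X t)))).prod))
        * ι (MvPowerSeries (Fin n) ℂ)
            ((KaehlerDifferential.D ℂ (MvPowerSeries (Fin n) ℂ))
              (u * ∏ t ∈ Finset.univ.filter (fun t : Fin n => (t : ℕ) < m),
                MvPowerSeries.X t ^ a t))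
      = (u * ∏ t ∈ Finset.univ.filter (fun t : Fin n => (t : ℕ) < m),
          MvPowerSeries.X t ^ a t) • η := by
  classical
  set S : Finset (Fin n) := Finset.univ.filter (fun t : Fin n => (t : ℕ) < m) with hS
  set X : Fin n → MvPowerSeries (Fin n) ℂ := MvPowerSeries.X with hXdef
  set D₀ := KaehlerDifferential.D ℂ (MvPowerSeries (Fin n) ℂ) with hD₀
  set l : List (Ω[MvPowerSeries (Fin n) ℂ⁄ℂ]) :=
    (J.sort (· ≤ ·) ++ I.sort (· ≤ ·)).map (fun t => D₀ (X t)) with hl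
  set W : ExteriorAlgebra (MvPowerSeries (Fin n) ℂ) (Ω[MvPowerSeries (Fin n) ℂ⁄ℂ]) :=
    ((J.sort (· ≤ ·) ++ I.sort (· ≤ ·)).map
      (fun t => ι (MvPowerSeries (Fin n) ℂ) (D₀ (X t)))).prod with hW
  have hWl : W = (l.map (ι (MvPowerSeries (Fin n) ℂ))).prod := by
    rw [hW, hl, List.map_map]; rfl
  set c : MvPowerSeries (Fin n) ℂ := f * ∏ t ∈ S \ J, X t with hc
  set P : MvPowerSeries (Fin n) ℂ := ∏ t ∈ S, X t ^ a t with hP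
  set e : Fin n → MvPowerSeries (Fin n) ℂ :=
    fun t => (a t : MvPowerSeries (Fin n) ℂ) * X t ^ (a t - 1) * ∏ s ∈ S.erase t, X s ^ a s
    with he
  set q : Fin n → MvPowerSeries (Fin n) ℂ :=
    fun t => f * (a t : MvPowerSeries (Fin n) ℂ) * ∏ s ∈ (S \ J).erase t, X s with hq
  set v : MvPowerSeries (Fin n) ℂ := ↑hu.unit⁻¹ with hv
  have huv : u * v = 1 := hu.mul_val_inv
  have hlen : l.length = K - 1 := by
    rw [hl, List.length_map, List.length_append, Finset.length_sort, Finset.length_sort, hcard]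
  have hmemW : ∀ x : Ω[MvPowerSeries (Fin n) ℂ⁄ℂ],
      W * ι (MvPowerSeries (Fin n) ℂ) x
        ∈ ⋀[MvPowerSeries (Fin n) ℂ]^K (Ω[MvPowerSeries (Fin n) ℂ⁄ℂ]) := by
    intro x
    have h1 := aux14_prod_mem (R := MvPowerSeries (Fin n) ℂ) (l ++ [x])
    rw [List.map_append, List.prod_append, List.map_singleton, List.prod_singleton,
      List.length_append, hlen, List.length_singleton, Nat.sub_add_cancel hK, ← hWl] at h1
    exact h1
  have hzero : ∀ t ∈ J, W * ι (MvPowerSeries (Fin n) ℂ) (D₀ (X t)) = 0 := by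
    intro t ht
    rw [hWl]
    refine aux14_prod_mul _ _ ?_
    rw [hl]
    exact List.mem_map_of_mem (List.mem_append_left _ ((J.mem_sort _).mpr ht))
  have hDP : D₀ P = ∑ t ∈ S, e t • D₀ (X t) := by
    rw [hP, aux14_deriv_prod]
    refine Finset.sum_congr rfl fun t ht => ?_
    rw [Derivation.leibniz_pow, ← Nat.cast_smul_eq_nsmul (MvPowerSeries (Fin n) ℂ),
      smul_smul, smul_smul, he]
    congr 1
    ring
  refine ⟨(∑ t ∈ S \ J, q t • (W * ι (MvPowerSeries (Fin n) ℂ) (D₀ (X t))))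
      + (v * c) • (W * ι (MvPowerSeries (Fin n) ℂ) (D₀ u)),
    Submodule.add_mem _
      (Submodule.sum_mem _ fun t _ => Submodule.smul_mem _ _ (hmemW _))
      (Submodule.smul_mem _ _ (hmemW _)), ?_⟩
  have step1 : ι (MvPowerSeries (Fin n) ℂ) (D₀ (u * P))
      = u • ι (MvPowerSeries (Fin n) ℂ) (D₀ P)
        + P • ι (MvPowerSeries (Fin n) ℂ) (D₀ u) := by
    rw [Derivation.leibniz, map_add, map_smul, map_smul]
  have step2 : ι (MvPowerSeries (Fin n) ℂ) (D₀ P)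
      = ∑ t ∈ S, e t • ι (MvPowerSeries (Fin n) ℂ) (D₀ (X t)) := by
    rw [hDP, map_sum]
    exact Finset.sum_congr rfl fun t _ => map_smul _ _ _
  calc (c • W) * ι (MvPowerSeries (Fin n) ℂ) (D₀ (u * P))
      = ∑ t ∈ S, (u * (c * e t)) • (W * ι (MvPowerSeries (Fin n) ℂ) (D₀ (X t)))
          + (c * P) • (W * ι (MvPowerSeries (Fin n) ℂ) (D₀ u)) := by
        rw [step1, step2, mul_add, Finset.smul_sum, Finset.mul_sum]
        congr 1
        · refine Finset.sum_congr rfl fun t _ => ?_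
          rw [mul_smul_comm, mul_smul_comm, smul_mul_assoc, smul_smul, smul_smul]
          congr 1
          ring
        · rw [mul_smul_comm, smul_mul_assoc, smul_smul, mul_comm P c]
    _ = ∑ t ∈ S \ J, (u * (c * e t)) • (W * ι (MvPowerSeries (Fin n) ℂ) (D₀ (X t)))
          + (c * P) • (W * ι (MvPowerSeries (Fin n) ℂ) (D₀ u)) := by
        congr 1
        refine (Finset.sum_subset Finset.sdiff_subset fun t htS htn => ?_).symm
        have htJ : t ∈ J := by
          by_contra hcon
          exact htn (Finset.mem_sdiff.mpr ⟨htS, hcon⟩)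
        rw [hzero t htJ, smul_zero]
    _ = (u * P) • ((∑ t ∈ S \ J, q t • (W * ι (MvPowerSeries (Fin n) ℂ) (D₀ (X t))))
          + (v * c) • (W * ι (MvPowerSeries (Fin n) ℂ) (D₀ u))) := by
        rw [smul_add, Finset.smul_sum]
        congr 1
        · refine Finset.sum_congr rfl fun t ht => ?_
          rw [smul_smul]
          congr 1
          obtain ⟨htS, htJ⟩ := Finset.mem_sdiff.mp ht
          have h1 : ∏ s ∈ S \ J, X s = X t * ∏ s ∈ (S \ J).erase t, X s :=
            (Finset.mul_prod_erase _ _ ht).symm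
          have h2 : P = X t ^ a t * ∏ s ∈ S.erase t, X s ^ a s := by
            rw [hP]; exact (Finset.mul_prod_erase _ _ htS).symm
          have h3 : X t * X t ^ (a t - 1) = X t ^ a t := by
            rw [← pow_succ']
            congr 1
            have := ha t htS
            omega
          rw [hc, hq, he, h1, h2, ← h3]
          ring
        · rw [smul_smul]
          congr 1
          calc c * P = (u * v) * (c * P) := by rw [huv, one_mul]
            _ = u * P * (v * c) := by ring
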